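/- Let (Ω, ℱ, ℙ) be a probability space, K ⊆ ℝ^m nonempty, closed and convex, and F : Ω × ℝ^m → ℝ^m a map such that ω ↦ F(ω, u) is measurable for each u ∈ ℝ^m, F(·, u₀) ∈ L²(ℙ; ℝ^m) for some u₀ ∈ ℝ^m, and there exist constants 0 < C ≤ L such that for almost every ω ∈ Ω: ‖F(ω, u₁) − F(ω, u₂)‖ ≤ L ‖u₁ − u₂‖ and ⟨F(ω, u₁) − F(ω, u₂), u₁ − u₂⟩ ≥ C ‖u₁ − u₂‖² for all u₁, u₂ ∈ ℝ^m. Then there exists a unique u ∈ L²(ℙ; ℝ^m) such that u(ω) ∈ K almost surely and, for almost every ω ∈ Ω, ⟨F(ω, u(ω)), v − u(ω)⟩ ≥ 0 for all v ∈ K. -/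

import Mathlib

open MeasureTheory
open scoped RealInnerProductSpace

open Filter Topology

section Aux

variable {m : ℕ} {Ω : Type*} [MeasurableSpace Ω]

lemma sf_comp_measurable
    (F : Ω → EuclideanSpace ℝ (Fin m) → EuclideanSpace ℝ (Fin m))
    (hFmeas : ∀ u, Measurable fun ω => F ω u)
    (s : SimpleFunc Ω (EuclideanSpace ℝ (Fin m))) :
    Measurable fun ω => F ω (s ω) := by
  have h : (fun ω => F ω (s ω))
      = fun ω => ∑ c ∈ s.range, Set.indicator (s ⁻¹' {c}) (fun ω' => F ω' c) ω := by
    funext ω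
    rw [Finset.sum_eq_single_of_mem (s ω) (s.mem_range_self ω)]
    · exact (Set.indicator_of_mem rfl _).symm
    · intro c _ hc
      exact Set.indicator_of_notMem (by simp [Ne.symm hc]) _
  rw [h]
  exact Finset.measurable_sum _ fun c _ =>
    (hFmeas c).indicator (s.measurableSet_preimage {c})

lemma comp_aemeasurable' (ℙ : Measure Ω)
    (F : Ω → EuclideanSpace ℝ (Fin m) → EuclideanSpace ℝ (Fin m))
    (hFmeas : ∀ u, Measurable fun ω => F ω u)
    (hcont : ∀ᵐ ω ∂ℙ, Continuous (F ω))
    {g : Ω → EuclideanSpace ℝ (Fin m)} (hg : Measurable g) :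
    AEMeasurable (fun ω => F ω (g ω)) ℙ := by
  refine aemeasurable_of_tendsto_metrizable_ae'
    (f := fun n ω => F ω (SimpleFunc.approxOn g hg Set.univ 0 (Set.mem_univ 0) n ω))
    (fun n => (sf_comp_measurable F hFmeas _).aemeasurable) ?_
  filter_upwards [hcont] with ω hω
  exact ((hω.tendsto _).comp
    (SimpleFunc.tendsto_approxOn hg (Set.mem_univ 0) (by simp)))

end Aux

set_option maxHeartbeats 2000000

/-- Existence and a.s. uniqueness for a random variational inequality: for a probability
space `(Ω, ℱ, ℙ)`, `K ⊆ ℝ^m` nonempty closed convex, and `F : Ω × ℝ^m → ℝ^m` measurable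
in `ω`, square-integrable at some `u₀`, and (a.s.) `L`-Lipschitz and `C`-strongly
monotone in `u` with `0 < C ≤ L`, there is a unique (up to a.s. equality)
`u ∈ L²(ℙ; ℝ^m)` with `u(ω) ∈ K` a.s. and `⟨F(ω, u(ω)), v − u(ω)⟩ ≥ 0` for all `v ∈ K`
for a.e. `ω`. -/
theorem stmt_8 {m : ℕ} {Ω : Type*} [MeasurableSpace Ω] (ℙ : Measure Ω)
    [IsProbabilityMeasure ℙ]
    (K : Set (EuclideanSpace ℝ (Fin m)))
    (hKne : K.Nonempty) (hKcl : IsClosed K) (hKcv : Convex ℝ K)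
    (F : Ω → EuclideanSpace ℝ (Fin m) → EuclideanSpace ℝ (Fin m))
    (hFmeas : ∀ u : EuclideanSpace ℝ (Fin m), Measurable fun ω => F ω u)
    (u₀ : EuclideanSpace ℝ (Fin m)) (hFu₀ : MemLp (fun ω => F ω u₀) 2 ℙ)
    (L C : ℝ) (hC : 0 < C) (hCL : C ≤ L)
    (hLip : ∀ᵐ ω ∂ℙ, ∀ u₁ u₂ : EuclideanSpace ℝ (Fin m),
      ‖F ω u₁ - F ω u₂‖ ≤ L * ‖u₁ - u₂‖)
    (hmono : ∀ᵐ ω ∂ℙ, ∀ u₁ u₂ : EuclideanSpace ℝ (Fin m),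
      C * ‖u₁ - u₂‖ ^ 2 ≤ ⟪F ω u₁ - F ω u₂, u₁ - u₂⟫) :
    ∃ u : Ω → EuclideanSpace ℝ (Fin m),
      MemLp u 2 ℙ ∧ (∀ᵐ ω ∂ℙ, u ω ∈ K) ∧
      (∀ᵐ ω ∂ℙ, ∀ v ∈ K, 0 ≤ ⟪F ω (u ω), v - u ω⟫) ∧
      ∀ u' : Ω → EuclideanSpace ℝ (Fin m),
        MemLp u' 2 ℙ → (∀ᵐ ω ∂ℙ, u' ω ∈ K) →
        (∀ᵐ ω ∂ℙ, ∀ v ∈ K, 0 ≤ ⟪F ω (u' ω), v - u' ω⟫) → u' =ᵐ[ℙ] u := by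
  classical
  have hL : 0 < L := hC.trans_le hCL
  set ρ : ℝ := C / L ^ 2 with hρdef
  have hρ : 0 < ρ := div_pos hC (by positivity)
  have hρL : ρ * L ^ 2 = C := by rw [hρdef]; field_simp [hL.ne']
  have hρC1 : ρ * C ≤ 1 := by
    rw [hρdef, div_mul_eq_mul_div, div_le_one (by positivity)]
    nlinarith
  have h1k : (0:ℝ) ≤ 1 - ρ * C := by linarith
  set k : ℝ := Real.sqrt (1 - ρ * C) with hkdef
  have hk0 : 0 ≤ k := Real.sqrt_nonneg _
  have hk2 : k ^ 2 = 1 - ρ * C := Real.sq_sqrt h1k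
  have hk1 : k < 1 := by nlinarith [mul_pos hρ hC]
  -- projection onto K
  have hproj : ∀ z : EuclideanSpace ℝ (Fin m),
      ∃ w ∈ K, ∀ v ∈ K, ⟪z - w, v - w⟫ ≤ 0 := by
    intro z
    obtain ⟨w, hwK, hw⟩ :=
      exists_norm_eq_iInf_of_complete_convex hKne hKcl.isComplete hKcv z
    exact ⟨w, hwK, fun v hv =>
      (norm_eq_iInf_iff_real_inner_le_zero hKcv hwK).1 hw v hv⟩
  choose P hPK hPle using hproj
  have hPid : ∀ w ∈ K, P w = w := by
    intro w hw
    have h := hPle w w hw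
    have h2 : ‖w - P w‖ ^ 2 ≤ 0 := by
      rwa [← real_inner_self_eq_norm_sq]
    have h3 : w - P w = 0 := by
      rw [← norm_eq_zero]
      nlinarith [norm_nonneg (w - P w)]
    exact (sub_eq_zero.1 h3).symm
  have hPlip : ∀ z₁ z₂, ‖P z₁ - P z₂‖ ≤ ‖z₁ - z₂‖ := by
    intro z₁ z₂
    have h1 := hPle z₁ (P z₂) (hPK z₂)
    have h2 := hPle z₂ (P z₁) (hPK z₁)
    have e : ⟪z₁ - z₂, P z₁ - P z₂⟫ - ‖P z₁ - P z₂‖ ^ 2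
        = -⟪z₁ - P z₁, P z₂ - P z₁⟫ - ⟪z₂ - P z₂, P z₁ - P z₂⟫ := by
      simp only [← real_inner_self_eq_norm_sq, inner_sub_left, inner_sub_right]
      ring
    have key : ‖P z₁ - P z₂‖ ^ 2 ≤ ⟪z₁ - z₂, P z₁ - P z₂⟫ := by linarith
    have hin := real_inner_le_norm (z₁ - z₂) (P z₁ - P z₂)
    rcases (norm_nonneg (P z₁ - P z₂)).eq_or_lt with h0 | h0
    · linarith [norm_nonneg (z₁ - z₂)]
    · have : ‖P z₁ - P z₂‖ * ‖P z₁ - P z₂‖ ≤ ‖z₁ - z₂‖ * ‖P z₁ - P z₂‖ := by nlinarith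
      exact le_of_mul_le_mul_right this h0
  have hPcont : Continuous P :=
    (LipschitzWith.of_dist_le_mul (K := 1) fun a b => by
      rw [dist_eq_norm, dist_eq_norm, NNReal.coe_one, one_mul]
      exact hPlip a b).continuous
  -- core contraction estimate
  have hcore : ∀ ω, (∀ u₁ u₂, ‖F ω u₁ - F ω u₂‖ ≤ L * ‖u₁ - u₂‖) →
      (∀ u₁ u₂, C * ‖u₁ - u₂‖ ^ 2 ≤ ⟪F ω u₁ - F ω u₂, u₁ - u₂⟫) →
      ∀ x y, ‖(x - ρ • F ω x) - (y - ρ • F ω y)‖ ≤ k * ‖x - y‖ := by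
    intro ω hl hm x y
    have hre : (x - ρ • F ω x) - (y - ρ • F ω y)
        = (x - y) - ρ • (F ω x - F ω y) := by
      rw [smul_sub]; abel
    have hexp : ‖(x - ρ • F ω x) - (y - ρ • F ω y)‖ ^ 2
        = ‖x - y‖ ^ 2 - 2 * ρ * ⟪F ω x - F ω y, x - y⟫
          + ρ ^ 2 * ‖F ω x - F ω y‖ ^ 2 := by
      rw [hre, norm_sub_sq_real, real_inner_smul_right, norm_smul,
        Real.norm_eq_abs, abs_of_pos hρ, real_inner_comm, mul_pow]
      ring
    have h1 := hm x y
    have h2 := hl x y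
    have h2' : ρ ^ 2 * ‖F ω x - F ω y‖ ^ 2 ≤ ρ ^ 2 * (L * ‖x - y‖) ^ 2 :=
      mul_le_mul_of_nonneg_left
        (by nlinarith [norm_nonneg (F ω x - F ω y), norm_nonneg (x - y)])
        (sq_nonneg ρ)
    have h5 : ρ ^ 2 * (L * ‖x - y‖) ^ 2 = ρ * C * ‖x - y‖ ^ 2 := by
      rw [← hρL]; ring
    have h4 : ρ * (C * ‖x - y‖ ^ 2) ≤ ρ * ⟪F ω x - F ω y, x - y⟫ :=
      mul_le_mul_of_nonneg_left h1 hρ.le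
    have hsq : ‖(x - ρ • F ω x) - (y - ρ • F ω y)‖ ^ 2 ≤ (k * ‖x - y‖) ^ 2 := by
      rw [hexp, mul_pow, hk2]; nlinarith
    calc ‖(x - ρ • F ω x) - (y - ρ • F ω y)‖
        = Real.sqrt (‖(x - ρ • F ω x) - (y - ρ • F ω y)‖ ^ 2) :=
          (Real.sqrt_sq (norm_nonneg _)).symm
      _ ≤ Real.sqrt ((k * ‖x - y‖) ^ 2) := Real.sqrt_le_sqrt hsq
      _ = k * ‖x - y‖ := Real.sqrt_sq (mul_nonneg hk0 (norm_nonneg _))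
  obtain ⟨w₀, hw₀⟩ := hKne
  -- almost sure continuity of F ω
  have hcont : ∀ᵐ ω ∂ℙ, Continuous (F ω) := by
    filter_upwards [hLip] with ω hω
    refine (LipschitzWith.of_dist_le_mul (K := L.toNNReal) fun a b => ?_).continuous
    rw [dist_eq_norm, dist_eq_norm]
    simpa [Real.coe_toNNReal L hL.le] using hω a b
  -- measurable one-step map
  have step : ∀ f : Ω → EuclideanSpace ℝ (Fin m), Measurable f →
      ∃ f' : Ω → EuclideanSpace ℝ (Fin m), Measurable f' ∧
        ∀ᵐ ω ∂ℙ, f' ω = P (f ω - ρ • F ω (f ω)) := by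
    intro f hf
    have h1 : AEMeasurable (fun ω => F ω (f ω)) ℙ :=
      comp_aemeasurable' ℙ F hFmeas hcont hf
    have h2 : AEMeasurable (fun ω => P (f ω - ρ • F ω (f ω))) ℙ :=
      hPcont.measurable.comp_aemeasurable (hf.aemeasurable.sub (h1.const_smul ρ))
    exact ⟨h2.mk _, h2.measurable_mk, h2.ae_eq_mk.symm⟩
  choose step' hstep1 hstep2 using step
  let useq : ℕ → {f : Ω → EuclideanSpace ℝ (Fin m) // Measurable f} := fun n =>
    Nat.rec (motive := fun _ => {f : Ω → EuclideanSpace ℝ (Fin m) // Measurable f})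
      ⟨fun _ => w₀, measurable_const⟩ (fun _ p => ⟨step' p.1 p.2, hstep1 p.1 p.2⟩) n
  have hrec : ∀ n, ∀ᵐ ω ∂ℙ,
      (useq (n + 1)).1 ω = P ((useq n).1 ω - ρ • F ω ((useq n).1 ω)) :=
    fun n => hstep2 (useq n).1 (useq n).2
  -- a.e. existence of limit
  have hconv : ∀ᵐ ω ∂ℙ, ∃ l, Tendsto (fun n => (useq n).1 ω) atTop (𝓝 l) := by
    filter_upwards [ae_all_iff.2 hrec, hLip, hmono] with ω hrecω hlω hmω
    have hcau : CauchySeq fun n => (useq n).1 ω := by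
      apply cauchySeq_of_le_geometric k (dist ((useq 0).1 ω) ((useq 1).1 ω)) hk1
      intro n
      induction n with
      | zero => rw [pow_zero, mul_one]; exact le_rfl
      | succ n ih =>
        have e1 : (useq (n + 1)).1 ω
            = P ((useq n).1 ω - ρ • F ω ((useq n).1 ω)) := hrecω n
        have e2 : (useq (n + 2)).1 ω
            = P ((useq (n + 1)).1 ω - ρ • F ω ((useq (n + 1)).1 ω)) := hrecω (n + 1)
        rw [dist_eq_norm, e1, e2]
        calc ‖P ((useq n).1 ω - ρ • F ω ((useq n).1 ω))
              - P ((useq (n+1)).1 ω - ρ • F ω ((useq (n+1)).1 ω))‖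
            ≤ ‖((useq n).1 ω - ρ • F ω ((useq n).1 ω))
              - ((useq (n+1)).1 ω - ρ • F ω ((useq (n+1)).1 ω))‖ := hPlip _ _
          _ ≤ k * ‖(useq n).1 ω - (useq (n+1)).1 ω‖ := hcore ω hlω hmω _ _
          _ = k * dist ((useq n).1 ω) ((useq (n+1)).1 ω) := by rw [dist_eq_norm]
          _ ≤ k * (dist ((useq 0).1 ω) ((useq 1).1 ω) * k ^ n) :=
              mul_le_mul_of_nonneg_left ih hk0
          _ = dist ((useq 0).1 ω) ((useq 1).1 ω) * k ^ (n + 1) := by ring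
    exact cauchySeq_tendsto_of_complete hcau
  obtain ⟨u, hu_meas, hu_tendsto⟩ :=
    measurable_limit_of_tendsto_metrizable_ae (fun n => (useq n).2.aemeasurable) hconv
  -- a.e. fixed point property
  have hfix : ∀ᵐ ω ∂ℙ, u ω = P (u ω - ρ • F ω (u ω))
      ∧ (∀ u₁ u₂, ‖F ω u₁ - F ω u₂‖ ≤ L * ‖u₁ - u₂‖)
      ∧ (∀ u₁ u₂, C * ‖u₁ - u₂‖ ^ 2 ≤ ⟪F ω u₁ - F ω u₂, u₁ - u₂⟫) := by
    filter_upwards [hu_tendsto, ae_all_iff.2 hrec, hLip, hmono, hcont]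
      with ω htend hrecω hlω hmω hcω
    refine ⟨?_, hlω, hmω⟩
    have hTcont : Continuous fun x : EuclideanSpace ℝ (Fin m) =>
        P (x - ρ • F ω x) :=
      hPcont.comp (continuous_id.sub (hcω.const_smul ρ))
    have h1 : Tendsto (fun n => (useq (n + 1)).1 ω) atTop (𝓝 (u ω)) :=
      htend.comp (tendsto_add_atTop_nat 1)
    have h2 : Tendsto (fun n => P ((useq n).1 ω - ρ • F ω ((useq n).1 ω)))
        atTop (𝓝 (P (u ω - ρ • F ω (u ω)))) := (hTcont.tendsto _).comp htend
    have h3 : (fun n => (useq (n + 1)).1 ω)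
        = fun n => P ((useq n).1 ω - ρ • F ω ((useq n).1 ω)) := funext hrecω
    exact tendsto_nhds_unique (h3 ▸ h1) h2
  -- membership and VI
  have hKmem : ∀ᵐ ω ∂ℙ, u ω ∈ K := by
    filter_upwards [hfix] with ω hω
    rw [hω.1]; exact hPK _
  have hVI : ∀ᵐ ω ∂ℙ, ∀ v ∈ K, 0 ≤ ⟪F ω (u ω), v - u ω⟫ := by
    filter_upwards [hfix] with ω hω
    intro v hv
    have h := hPle (u ω - ρ • F ω (u ω)) v hv
    rw [← hω.1] at h
    have e : (u ω - ρ • F ω (u ω)) - u ω = -(ρ • F ω (u ω)) := by abel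
    rw [e, inner_neg_left, real_inner_smul_left] at h
    have h0 : ρ * 0 ≤ ρ * ⟪F ω (u ω), v - u ω⟫ := by
      rw [mul_zero]; linarith
    exact le_of_mul_le_mul_left h0 hρ
  -- L² bound
  have hmem : MemLp u 2 ℙ := by
    set b : ℝ := ρ / (1 - k) with hbdef
    have h1k' : 0 < 1 - k := by linarith
    have hb : 0 ≤ b := div_nonneg hρ.le h1k'.le
    set a : ℝ := ‖w₀‖ + b * (L * ‖w₀ - u₀‖) with hadef
    have hbound : ∀ᵐ ω ∂ℙ, ‖u ω‖ ≤ a + b * ‖F ω u₀‖ := by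
      filter_upwards [hfix] with ω hω
      obtain ⟨hfixω, hlω, hmω⟩ := hω
      set x := u ω
      have key : ‖x - w₀‖ ≤ k * ‖x - w₀‖ + ρ * ‖F ω w₀‖ := by
        have e0 : x - w₀ = P (x - ρ • F ω x) - P w₀ := by
          rw [hPid w₀ hw₀, ← hfixω]
        have e1 : ‖P (x - ρ • F ω x) - P w₀‖ ≤ ‖(x - ρ • F ω x) - w₀‖ := hPlip _ _
        have e2 : (x - ρ • F ω x) - w₀
            = ((x - ρ • F ω x) - (w₀ - ρ • F ω w₀)) + (-(ρ • F ω w₀)) := by abel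
        have e3 : ‖(x - ρ • F ω x) - w₀‖
            ≤ ‖(x - ρ • F ω x) - (w₀ - ρ • F ω w₀)‖ + ‖ρ • F ω w₀‖ := by
          rw [e2]; exact (norm_add_le _ _).trans (by rw [norm_neg])
        have e4 := hcore ω hlω hmω x w₀
        have e0' : ‖x - w₀‖ = ‖P (x - ρ • F ω x) - P w₀‖ := by rw [← e0]
        have e5 : ‖ρ • F ω w₀‖ = ρ * ‖F ω w₀‖ := by
          rw [norm_smul, Real.norm_eq_abs, abs_of_pos hρ]
        linarith [e0', e1, e3, e4, e5]
      have hFw : ‖F ω w₀‖ ≤ L * ‖w₀ - u₀‖ + ‖F ω u₀‖ := by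
        calc ‖F ω w₀‖ ≤ ‖F ω w₀ - F ω u₀‖ + ‖F ω u₀‖ := by
              simpa using norm_add_le (F ω w₀ - F ω u₀) (F ω u₀)
          _ ≤ L * ‖w₀ - u₀‖ + ‖F ω u₀‖ := by linarith [hlω w₀ u₀]
      have hxw : ‖x - w₀‖ ≤ b * (L * ‖w₀ - u₀‖ + ‖F ω u₀‖) := by
        rw [hbdef, div_mul_eq_mul_div, le_div_iff₀ h1k']
        nlinarith [mul_le_mul_of_nonneg_left hFw hρ.le]
      calc ‖x‖ ≤ ‖x - w₀‖ + ‖w₀‖ := by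
            simpa using norm_add_le (x - w₀) w₀
        _ ≤ a + b * ‖F ω u₀‖ := by rw [hadef]; nlinarith
    have hg : MemLp (fun ω => a + b * ‖F ω u₀‖) 2 ℙ :=
      (memLp_const a).add (hFu₀.norm.const_mul b)
    refine hg.of_le hu_meas.aestronglyMeasurable ?_
    filter_upwards [hbound] with ω hω
    rw [Real.norm_eq_abs]
    exact hω.trans (le_abs_self _)
  refine ⟨u, hmem, hKmem, hVI, ?_⟩
  -- uniqueness
  intro u' _ hu'K hu'VI
  filter_upwards [hu'K, hu'VI, hKmem, hVI, hmono] with ω h1 h2 h3 h4 h5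
  have i1 := h4 (u' ω) h1
  have i2 := h2 (u ω) h3
  have i3 := h5 (u ω) (u' ω)
  have e : ⟪F ω (u ω) - F ω (u' ω), u ω - u' ω⟫
      = -⟪F ω (u ω), u' ω - u ω⟫ - ⟪F ω (u' ω), u ω - u' ω⟫ := by
    simp only [inner_sub_left, inner_sub_right]; ring
  have hn : ‖u ω - u' ω‖ ^ 2 ≤ 0 := by nlinarith
  have : u ω - u' ω = 0 := by
    rw [← norm_eq_zero]; nlinarith [norm_nonneg (u ω - u' ω)]
  exact (sub_eq_zero.1 this).symm
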